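/- For any odd integer p ≥ 3 and any integer c, the decryption function of the integer-based scheme can be computed bitwise as ([c]_p) mod 2 = (c mod 2) XOR (⌊c/p⌉ mod 2); equivalently, [c]_p ≡ c + ⌊c/p⌉ (mod 2), where ⌊c/p⌉ denotes the integer nearest to c/p (which is unambiguous since p is odd, so c/p is never exactly halfway between two integers). -/

import Mathlib

lemma dghv_round_eq (p : ℕ) (hp3 : 3 ≤ p) (c : ℤ) :
    round ((c : ℚ) / (p : ℚ)) = (2 * c + p) / (2 * (p : ℤ)) := by
  have hp0 : (0 : ℚ) < (p : ℚ) := by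
    have : (0:ℕ) < p := by omega
    exact_mod_cast this
  have h1 : (c : ℚ) / (p : ℚ) + 1 / 2 = ((2 * c + p : ℤ) : ℚ) / ((2 * p : ℕ) : ℚ) := by
    push_cast
    field_simp
  rw [round_eq, h1, Rat.floor_intCast_div_natCast]
  push_cast
  ring_nf

lemma dghv_bmod_eq (p : ℕ) (hp_odd : Odd p) (hp3 : 3 ≤ p) (c : ℤ) :
    Int.bmod c p = c - p * round ((c : ℚ) / (p : ℚ)) := by
  rw [dghv_round_eq p hp3 c]
  have hp0 : (0 : ℤ) < (p : ℤ)  := by exact_mod_cast Nat.lt_of_lt_of_le (by norm_num) hp3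
  have hpodd : (p : ℤ) % 2 = 1 := by
    obtain ⟨k, hk⟩ := hp_odd
    subst hk; push_cast; omega
  set r := c % (p : ℤ) with hr
  set q := c / (p : ℤ) with hq
  have hc : c = (p : ℤ) * q + r := (Int.mul_ediv_add_emod c p).symm
  have hr0 : 0 ≤ r := Int.emod_nonneg c (by omega)
  have hrp : r < (p : ℤ) := Int.emod_lt_of_pos c hp0
  have hsplit : (2 * c + (p : ℤ)) / (2 * (p : ℤ)) = q + (2 * r + p) / (2 * (p : ℤ)) := by
    have : 2 * c + (p : ℤ) = (2 * r + p) + (2 * (p : ℤ)) * q := by rw [hc]; ring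
    rw [this, Int.add_mul_ediv_left _ _ (by omega)]
    ring
  have hbmod : Int.bmod c p = if r < ((p : ℤ) + 1) / 2 then r else r - p := Int.bmod_def c p
  by_cases h : 2 * r < (p : ℤ)
  · have ht : (2 * r + (p : ℤ)) / (2 * (p : ℤ)) = 0 :=
      Int.ediv_eq_zero_of_lt (by omega) (by omega)
    rw [hsplit, ht, hbmod, if_pos (by omega)]
    rw [hc]; ring
  · have ht : (2 * r + (p : ℤ)) / (2 * (p : ℤ)) = 1 := by
      have h2 : 2 * r + (p : ℤ) = (2 * r - p) + (2 * (p : ℤ)) * 1 := by ring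
      rw [h2, Int.add_mul_ediv_left _ _ (by omega : 2 * (p:ℤ) ≠ 0),
        Int.ediv_eq_zero_of_lt (by omega) (by omega)]
      norm_num
    rw [hsplit, ht, hbmod, if_neg (by omega)]
    rw [hc]; ring

theorem dghv_decryption_bitwise (p : ℕ) (hp_odd : Odd p) (hp : 3 ≤ p) (c : ℤ) :
    (Int.bmod c p) % 2 = (c % 2 + (round ((c : ℚ) / (p : ℚ))) % 2) % 2 ∧
    Int.bmod c p ≡ c + round ((c : ℚ) / (p : ℚ)) [ZMOD 2] := by
  obtain ⟨k, hk⟩ := hp_odd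
  have hkey := dghv_bmod_eq p ⟨k, hk⟩ hp c
  set R := round ((c : ℚ) / (p : ℚ)) with hR
  have hp2 : (p : ℤ) = 2 * k + 1 := by subst hk; push_cast; ring
  have hfin : Int.bmod c p = c - 2 * (k * R) - R := by
    rw [hkey, hp2]; ring
  constructor
  · omega
  · show Int.ModEq 2 _ _
    unfold Int.ModEq
    omega
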